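/- arXiv:2511.02741 — 2 statements merged into one kernel-verified Lean document; each statement's English description precedes it below -/
import Mathlib

section
/- Let 0<α<1, 1<p<1/α, and define q by 1/q = 1/p − α. Let w be a weight on ℝ. Suppose there exists K>0 such that ‖w·M_α^+f‖_{L^{q,∞}} ≤ K·‖f·w‖_{L^p} for every measurable function f with f·w ∈ L^p(ℝ). Then [w]_{A_{p,q}^{+,*}} < ∞, and moreover [w]_{A_{p,q}^{+,*}} ≤ c·K for a constant c depending only on p, q, α. -/
open MeasureTheory Set ENNReal

/-- The one-sided fractional maximal operator
`M_α^+ f(x) = sup_{h>0} (1/h^{1-α}) ∫_x^{x+h} |f|`. -/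
noncomputable def MplusFrac (α : ℝ) (f : ℝ → ℝ) (x : ℝ) : ℝ≥0∞ :=
  ⨆ (h : ℝ) (_ : 0 < h),
    ENNReal.ofReal (1 / h ^ (1 - α)) * ∫⁻ y in Set.Ioo x (x + h), ENNReal.ofReal |f y|

/-- The weak `L^q` quasinorm `sup_{t>0} t |{x : g(x) > t}|^{1/q}` of an
`ℝ≥0∞`-valued function. -/
noncomputable def weakNorm (q : ℝ) (g : ℝ → ℝ≥0∞) : ℝ≥0∞ :=
  ⨆ (t : ℝ) (_ : 0 < t),
    ENNReal.ofReal t * (volume {x : ℝ | ENNReal.ofReal t < g x}) ^ (1 / q)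

/-- The weak `L^1` quasinorm `sup_{t>0} t |{x : |f(x)| > t}|` of a real function. -/
noncomputable def weakL1 (f : ℝ → ℝ) : ℝ≥0∞ :=
  ⨆ (t : ℝ) (_ : 0 < t), ENNReal.ofReal t * volume {x : ℝ | t < |f x|}

/-- `[w]_{A_{p,q}^{+,*}} = sup_{a<b<c} ((1/(c-a)) ‖w^q χ_{(a,b)}‖_{L^{1,∞}})^{1/q}
((1/(c-a)) ∫_b^c w^{-p'})^{1/p'}` where `p' = p/(p-1)`. -/
noncomputable def ApqStarPlusConst (p q : ℝ) (w : ℝ → ℝ) : ℝ≥0∞ :=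
  ⨆ (a : ℝ) (b : ℝ) (c : ℝ) (_ : a < b) (_ : b < c),
    (ENNReal.ofReal (1 / (c - a)) *
        weakL1 (Set.indicator (Set.Ioo a b) (fun x => w x ^ q))) ^ (1 / q) *
      (ENNReal.ofReal (1 / (c - a)) *
        ∫⁻ y in Set.Ioo b c, ENNReal.ofReal (w y ^ (-(p / (p - 1))))) ^ ((p - 1) / p)

lemma aux_pw {p v m : ℝ} (hp : 1 < p) (hv : 0 ≤ v) (hm : 0 ≤ m)
    (hmg : m ≤ v ^ (-(p / (p - 1)))) : (m * v) ^ p ≤ m := by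
  have hp0 : (0:ℝ) < p := lt_trans one_pos hp
  rcases eq_or_lt_of_le hv with hv0 | hv0
  · rw [← hv0, mul_zero, Real.zero_rpow hp0.ne']
    exact hm
  rcases eq_or_lt_of_le hm with hm0 | hm0
  · rw [← hm0, zero_mul, Real.zero_rpow hp0.ne']
  have hp1 : (0:ℝ) < p - 1 := by linarith
  have key : m ^ (p - 1) ≤ v ^ (-p) := by
    calc m ^ (p - 1) ≤ (v ^ (-(p / (p - 1)))) ^ (p - 1) :=
          Real.rpow_le_rpow hm hmg hp1.le
      _ = v ^ (-p) := by
          rw [← Real.rpow_mul hv]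
          congr 1
          field_simp
  calc (m * v) ^ p = m ^ p * v ^ p := Real.mul_rpow hm hv
    _ = m ^ (p - 1) * m * v ^ p := by
        have hmp : m ^ p = m ^ (p - 1) * m := by
          nth_rewrite 1 [show p = (p - 1) + 1 by ring]
          rw [Real.rpow_add hm0, Real.rpow_one]
        rw [hmp]
    _ ≤ v ^ (-p) * m * v ^ p := by
        have hb : (0:ℝ) ≤ m * v ^ p := by positivity
        nlinarith [Real.rpow_nonneg hv0.le p, Real.rpow_nonneg hm p]
    _ = m * (v ^ (-p) * v ^ p) := by ring
    _ = m := by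
        rw [← Real.rpow_add hv0]
        simp

lemma key_lemma (α p q : ℝ) (hα : 0 < α) (hα1 : α < 1) (hp : 1 < p) (hpα : p < 1 / α)
    (hq : 1 / q = 1 / p - α) (v : ℝ → ℝ) (hv : Measurable v) (hv0 : ∀ x, 0 ≤ v x)
    (K : ℝ) (hK : 0 < K)
    (H : ∀ f : ℝ → ℝ, Measurable f →
        MemLp (fun x => f x * v x) (ENNReal.ofReal p) →
        weakNorm q (fun x => ENNReal.ofReal (v x) * MplusFrac α f x) ≤
          ENNReal.ofReal K * (∫⁻ x, ENNReal.ofReal (|f x| * v x) ^ p) ^ (1 / p)) :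
    ApqStarPlusConst p q v ≤ ENNReal.ofReal K := by
  have hp0 : (0:ℝ) < p := lt_trans one_pos hp
  have hp1 : (0:ℝ) < p - 1 := by linarith
  have hr : (0:ℝ) < (p - 1) / p := div_pos hp1 hp0
  have hap : α * p < 1 := by
    have := (lt_div_iff₀ hα).mp hpα
    linarith [mul_comm p α]
  have hqinv : (0:ℝ) < 1 / q := by
    rw [hq, sub_pos, lt_div_iff₀ hp0]
    linarith
  have hq0 : (0:ℝ) < q := by
    by_contra h
    push_neg at h
    have : 1 / q ≤ 0 := div_nonpos_of_nonneg_of_nonpos zero_le_one h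
    linarith
  have hsum : 1 / q + (p - 1) / p = 1 - α := by
    have h1 : (p - 1) / p = 1 - 1 / p := by field_simp
    rw [hq, h1]; ring
  unfold ApqStarPlusConst
  refine iSup_le fun a => iSup_le fun b => iSup_le fun c => iSup_le fun hab => iSup_le fun hbc => ?_
  set L : ℝ := c - a with hLdef
  have hL : 0 < L := by rw [hLdef]; linarith
  set g : ℝ → ℝ := fun y => v y ^ (-(p / (p - 1))) with hgdef
  have hg0 : ∀ y, 0 ≤ g y := fun y => Real.rpow_nonneg (hv0 y) _
  have hgm : Measurable g := by
    have h1 : Measurable fun y => (v y ^ (p / (p - 1)))⁻¹ :=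
      (((Real.continuous_rpow_const (le_of_lt (div_pos hp0 hp1))).measurable).comp hv).inv
    have : g = fun y => (v y ^ (p / (p - 1)))⁻¹ := by
      funext y
      exact Real.rpow_neg (hv0 y) _
    rw [this]
    exact h1
  set F : ℕ → ℝ → ℝ := fun n y => min (g y) (n + 1) with hFdef
  set An : ℕ → ℝ≥0∞ := fun n => ∫⁻ y in Ioo b c, ENNReal.ofReal (F n y) with hAndef
  set A : ℝ≥0∞ := ∫⁻ y in Ioo b c, ENNReal.ofReal (g y) with hAdef
  have hF0 : ∀ n y, 0 ≤ F n y := fun n y => le_min (hg0 y) (by positivity)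
  have hFm : ∀ n, Measurable (F n) := fun n => hgm.min measurable_const
  have hAn_top : ∀ n, An n < ⊤ := by
    intro n
    calc An n ≤ ∫⁻ _ in Ioo b c, ENNReal.ofReal ((n:ℝ) + 1) :=
          lintegral_mono fun y => ofReal_le_ofReal (min_le_right _ _)
      _ = ENNReal.ofReal ((n:ℝ) + 1) * volume (Ioo b c) := setLIntegral_const _ _
      _ < ⊤ := ENNReal.mul_lt_top ofReal_lt_top (by rw [Real.volume_Ioo]; exact ofReal_lt_top)
  have hA_sup : ⨆ n, An n = A := by
    rw [hAndef, hAdef]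
    rw [← lintegral_iSup (fun n => (hFm n).ennreal_ofReal)]
    · apply lintegral_congr
      intro y
      apply le_antisymm
      · exact iSup_le fun n => ofReal_le_ofReal (min_le_left _ _)
      · obtain ⟨n, hn⟩ := exists_nat_ge (g y)
        have : ENNReal.ofReal (g y) = ENNReal.ofReal (F n y) := by
          rw [hFdef]
          simp only
          rw [min_eq_left (by linarith)]
        rw [this]
        exact le_iSup (fun n => ENNReal.ofReal (F n y)) n
    · intro m n hmn y
      exact ofReal_le_ofReal (min_le_min le_rfl (by exact_mod_cast by norm_num [Nat.cast_le, hmn] : ((m:ℝ)+1 ≤ (n:ℝ)+1)))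
  set f : ℕ → ℝ → ℝ := fun n => (Ioo b c).indicator (F n) with hfdef
  have hfm : ∀ n, Measurable (f n) := fun n => (hFm n).indicator measurableSet_Ioo
  have hf0 : ∀ n x, 0 ≤ f n x := by
    intro n x
    rw [hfdef]
    exact Set.indicator_nonneg (fun y _ => hF0 n y) x
  have hInt : ∀ n, (∫⁻ x, ENNReal.ofReal (|f n x| * v x) ^ p) ≤ An n := by
    intro n
    have hpt : ∀ x, ENNReal.ofReal (|f n x| * v x) ^ p ≤
        (Ioo b c).indicator (fun y => ENNReal.ofReal (F n y)) x := by
      intro x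
      by_cases hx : x ∈ Ioo b c
      · rw [Set.indicator_of_mem hx]
        have hfx : f n x = F n x := by rw [hfdef]; exact Set.indicator_of_mem hx _
        rw [hfx, abs_of_nonneg (hF0 n x)]
        rw [ofReal_rpow_of_nonneg (mul_nonneg (hF0 n x) (hv0 x)) hp0.le]
        exact ofReal_le_ofReal (aux_pw hp (hv0 x) (hF0 n x) (min_le_left _ _))
      · rw [Set.indicator_of_notMem hx]
        have hfx : f n x = 0 := by rw [hfdef]; exact Set.indicator_of_notMem hx _
        rw [hfx]
        simp [ENNReal.zero_rpow_of_pos hp0]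
    calc (∫⁻ x, ENNReal.ofReal (|f n x| * v x) ^ p)
        ≤ ∫⁻ x, (Ioo b c).indicator (fun y => ENNReal.ofReal (F n y)) x := lintegral_mono hpt
      _ = An n := lintegral_indicator measurableSet_Ioo _
  have hMem : ∀ n, MemLp (fun x => f n x * v x) (ENNReal.ofReal p) := by
    intro n
    constructor
    · exact ((hfm n).mul hv).aestronglyMeasurable
    · rw [eLpNorm_lt_top_iff_lintegral_rpow_enorm_lt_top
        (by simp [ENNReal.ofReal_eq_zero]; linarith) ofReal_ne_top]
      have heq : ∀ x : ℝ, ‖f n x * v x‖ₑ ^ (ENNReal.ofReal p).toReal =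
          ENNReal.ofReal (|f n x| * v x) ^ p := by
        intro x
        rw [ENNReal.toReal_ofReal hp0.le, Real.enorm_eq_ofReal_abs, abs_mul,
          abs_of_nonneg (hv0 x)]
      calc (∫⁻ x, ‖f n x * v x‖ₑ ^ (ENNReal.ofReal p).toReal)
          = ∫⁻ x, ENNReal.ofReal (|f n x| * v x) ^ p := lintegral_congr fun x => heq x
        _ ≤ An n := hInt n
        _ < ⊤ := hAn_top n
  have hM : ∀ n, ∀ x ∈ Ioo a b,
      ENNReal.ofReal (1 / L ^ (1 - α)) * An n ≤ MplusFrac α (f n) x := by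
    intro n x hx
    have hsub : Ioo b c ⊆ Ioo x (x + L) := by
      intro y hy
      constructor
      · linarith [hx.2, hy.1]
      · have : x + L > c := by rw [hLdef]; linarith [hx.1]
        linarith [hy.2]
    have h1 : An n ≤ ∫⁻ y in Ioo x (x + L), ENNReal.ofReal |f n y| := by
      have h2 : An n = ∫⁻ y in Ioo b c, ENNReal.ofReal |f n y| := by
        apply setLIntegral_congr_fun measurableSet_Ioo
        intro y hy
        rw [hfdef]
        simp only
        rw [Set.indicator_of_mem hy, abs_of_nonneg (hF0 n y)]
      rw [h2]
      exact lintegral_mono_set hsub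
    calc ENNReal.ofReal (1 / L ^ (1 - α)) * An n
        ≤ ENNReal.ofReal (1 / L ^ (1 - α)) * ∫⁻ y in Ioo x (x + L), ENNReal.ofReal |f n y| :=
          mul_le_mul_right h1 _
      _ ≤ MplusFrac α (f n) x := by
          unfold MplusFrac
          exact le_iSup₂ (f := fun (h : ℝ) (_ : 0 < h) =>
            ENNReal.ofReal (1 / h ^ (1 - α)) * ∫⁻ y in Ioo x (x + h), ENNReal.ofReal |f n y|) L hL
  by_cases hA0 : A = 0
  · rw [hA0, mul_zero, ENNReal.zero_rpow_of_pos hr, mul_zero]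
    exact zero_le
  have hAn0 : ∀ n, An n ≠ 0 := by
    intro n hn
    apply hA0
    rw [hAndef] at hn
    simp only at hn
    have h1 := (lintegral_eq_zero_iff ((hFm n).ennreal_ofReal)).mp hn
    rw [hAdef]
    rw [lintegral_eq_zero_iff (hgm.ennreal_ofReal)]
    filter_upwards [h1] with y hy
    simp only [Pi.zero_apply, ENNReal.ofReal_eq_zero] at hy ⊢
    rcases le_or_gt (g y) ((n:ℝ) + 1) with h | h
    · rw [hFdef] at hy
      simp only [min_eq_left h] at hy
      exact hy
    · exfalso
      rw [hFdef] at hy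
      simp only [min_eq_right h.le] at hy
      have : ((n:ℝ) + 1) > 0 := by positivity
      linarith
  have hs_pos : (0:ℝ) < 1 / L ^ (1 - α) := by positivity
  set s : ℝ≥0∞ := ENNReal.ofReal (1 / L ^ (1 - α)) with hsdef
  have hs0 : s ≠ 0 := by
    rw [hsdef]
    simp only [ne_eq, ENNReal.ofReal_eq_zero, not_le]
    exact hs_pos
  have hsT : s ≠ ⊤ := ofReal_ne_top
  have hWq : ∀ (n : ℕ) (u : ℝ), 0 < u →
      ENNReal.ofReal u * (volume (Ioo a b ∩ {x | u < v x})) ^ (1 / q) ≤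
        ENNReal.ofReal K * ENNReal.ofReal (L ^ (1 - α)) * (An n) ^ (-((p - 1) / p)) := by
    intro n u hu
    set B : ℝ≥0∞ := s * An n with hBdef
    have hB0 : B ≠ 0 := mul_ne_zero hs0 (hAn0 n)
    have hBT : B ≠ ⊤ := ENNReal.mul_ne_top hsT (hAn_top n).ne
    set t : ℝ := u * B.toReal with htdef
    have ht : 0 < t := mul_pos hu (ENNReal.toReal_pos hB0 hBT)
    have htB : ENNReal.ofReal t = ENNReal.ofReal u * B := by
      rw [htdef, ENNReal.ofReal_mul hu.le, ENNReal.ofReal_toReal hBT]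
    have hsubset : Ioo a b ∩ {x | u < v x} ⊆
        {x | ENNReal.ofReal t < ENNReal.ofReal (v x) * MplusFrac α (f n) x} := by
      rintro x ⟨hx1, hx2⟩
      have h1 : ENNReal.ofReal t < ENNReal.ofReal (v x) * B := by
        rw [htB]
        exact ENNReal.mul_lt_mul_left hB0 hBT
          ((ofReal_lt_ofReal_iff_of_nonneg hu.le).mpr hx2)
      have h2 : ENNReal.ofReal (v x) * B ≤ ENNReal.ofReal (v x) * MplusFrac α (f n) x := by
        rw [hBdef]
        exact mul_le_mul_right (hM n x hx1) _
      exact lt_of_lt_of_le h1 h2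
    have hterm : ENNReal.ofReal t *
        (volume {x : ℝ | ENNReal.ofReal t < ENNReal.ofReal (v x) * MplusFrac α (f n) x}) ^ (1 / q) ≤
        weakNorm q (fun x => ENNReal.ofReal (v x) * MplusFrac α (f n) x) := by
      unfold weakNorm
      exact le_iSup₂ (f := fun (t : ℝ) (_ : 0 < t) => ENNReal.ofReal t *
        (volume {x : ℝ | ENNReal.ofReal t < ENNReal.ofReal (v x) * MplusFrac α (f n) x}) ^ (1 / q)) t ht
    have hchain : (ENNReal.ofReal u * (volume (Ioo a b ∩ {x | u < v x})) ^ (1 / q)) * B ≤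
        ENNReal.ofReal K * (An n) ^ (1 / p) := by
      have h3 : ENNReal.ofReal u * (volume (Ioo a b ∩ {x | u < v x})) ^ (1 / q) * B =
          ENNReal.ofReal t * (volume (Ioo a b ∩ {x | u < v x})) ^ (1 / q) := by
        rw [htB]; ring
      rw [h3]
      calc ENNReal.ofReal t * (volume (Ioo a b ∩ {x | u < v x})) ^ (1 / q)
          ≤ ENNReal.ofReal t *
            (volume {x | ENNReal.ofReal t < ENNReal.ofReal (v x) * MplusFrac α (f n) x}) ^ (1 / q) :=
            mul_le_mul_right (ENNReal.rpow_le_rpow (measure_mono hsubset) hqinv.le) _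
        _ ≤ weakNorm q (fun x => ENNReal.ofReal (v x) * MplusFrac α (f n) x) := hterm
        _ ≤ ENNReal.ofReal K * (∫⁻ x, ENNReal.ofReal (|f n x| * v x) ^ p) ^ (1 / p) :=
            H (f n) (hfm n) (hMem n)
        _ ≤ ENNReal.ofReal K * (An n) ^ (1 / p) :=
            mul_le_mul_right (ENNReal.rpow_le_rpow (hInt n) (by positivity)) _
    have hdiv := (ENNReal.le_div_iff_mul_le (Or.inl hB0) (Or.inl hBT)).mpr hchain
    refine le_trans hdiv (le_of_eq ?_)
    have hsinv : s⁻¹ = ENNReal.ofReal (L ^ (1 - α)) := by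
      rw [hsdef, one_div, ENNReal.ofReal_inv_of_pos (Real.rpow_pos_of_pos hL _), inv_inv]
    have hAninv : (An n) ^ (1 / p) * (An n)⁻¹ = (An n) ^ (-((p - 1) / p)) := by
      rw [← ENNReal.rpow_neg_one (An n), ← ENNReal.rpow_add _ _ (hAn0 n) (hAn_top n).ne]
      congr 1
      field_simp
      ring
    rw [div_eq_mul_inv, hBdef, ENNReal.mul_inv (Or.inl hs0) (Or.inl hsT), hsinv]
    calc ENNReal.ofReal K * An n ^ (1 / p) * (ENNReal.ofReal (L ^ (1 - α)) * (An n)⁻¹)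
        = ENNReal.ofReal K * ENNReal.ofReal (L ^ (1 - α)) * (An n ^ (1 / p) * (An n)⁻¹) := by
          ring
      _ = ENNReal.ofReal K * ENNReal.ofReal (L ^ (1 - α)) * An n ^ (-((p - 1) / p)) := by
          rw [hAninv]
  have hset : ∀ t : ℝ, 0 < t →
      {x : ℝ | t < |Set.indicator (Ioo a b) (fun x => v x ^ q) x|} =
        Ioo a b ∩ {x | t ^ (1 / q) < v x} := by
    intro t ht
    ext x
    simp only [mem_setOf_eq, mem_inter_iff]
    by_cases hx : x ∈ Ioo a b
    · rw [Set.indicator_of_mem hx, abs_of_nonneg (Real.rpow_nonneg (hv0 x) q)]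
      constructor
      · intro h
        refine ⟨hx, ?_⟩
        have h1 : t ^ (1 / q) < (v x ^ q) ^ (1 / q) := Real.rpow_lt_rpow ht.le h hqinv
        rwa [← Real.rpow_mul (hv0 x), mul_one_div_cancel hq0.ne', Real.rpow_one] at h1
      · rintro ⟨-, h⟩
        have h1 : (t ^ (1 / q)) ^ q < v x ^ q :=
          Real.rpow_lt_rpow (Real.rpow_nonneg ht.le _) h hq0
        rwa [← Real.rpow_mul ht.le, one_div_mul_cancel hq0.ne', Real.rpow_one] at h1
    · rw [Set.indicator_of_notMem hx]
      simp only [abs_zero]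
      constructor
      · intro h; exact absurd h (not_lt.mpr ht.le)
      · rintro ⟨hx', -⟩; exact absurd hx' hx
  have hW : ∀ n : ℕ, weakL1 (Set.indicator (Ioo a b) (fun x => v x ^ q)) ≤
      (ENNReal.ofReal K * ENNReal.ofReal (L ^ (1 - α)) * (An n) ^ (-((p - 1) / p))) ^ q := by
    intro n
    unfold weakL1
    refine iSup₂_le fun t ht => ?_
    rw [hset t ht]
    have h1 : (ENNReal.ofReal (t ^ (1 / q)) *
        (volume (Ioo a b ∩ {x | t ^ (1 / q) < v x})) ^ (1 / q)) ^ q =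
        ENNReal.ofReal t * volume (Ioo a b ∩ {x | t ^ (1 / q) < v x}) := by
      rw [ENNReal.mul_rpow_of_nonneg _ _ hq0.le, ← ENNReal.rpow_mul, one_div_mul_cancel hq0.ne',
        ENNReal.rpow_one, ENNReal.ofReal_rpow_of_pos (Real.rpow_pos_of_pos ht _),
        ← Real.rpow_mul ht.le, one_div_mul_cancel hq0.ne', Real.rpow_one]
    rw [← h1]
    exact ENNReal.rpow_le_rpow (hWq n _ (Real.rpow_pos_of_pos ht _)) hq0.le
  have hL0' : ENNReal.ofReal (1 / L) ≠ 0 := by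
    simp only [ne_eq, ENNReal.ofReal_eq_zero, not_le]
    positivity
  have hLT' : ENNReal.ofReal (1 / L) ≠ ⊤ := ofReal_ne_top
  have hCn : ∀ n : ℕ,
      (ENNReal.ofReal (1 / L) * weakL1 (Set.indicator (Ioo a b) (fun x => v x ^ q))) ^ (1 / q) *
        (ENNReal.ofReal (1 / L) * An n) ^ ((p - 1) / p) ≤ ENNReal.ofReal K := by
    intro n
    set C : ℝ≥0∞ := ENNReal.ofReal K * ENNReal.ofReal (L ^ (1 - α)) *
      (An n) ^ (-((p - 1) / p)) with hCdef
    have h1 : (ENNReal.ofReal (1 / L) *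
        weakL1 (Set.indicator (Ioo a b) (fun x => v x ^ q))) ^ (1 / q) ≤
        (ENNReal.ofReal (1 / L)) ^ (1 / q) * C := by
      calc (ENNReal.ofReal (1 / L) * weakL1 (Set.indicator (Ioo a b) (fun x => v x ^ q))) ^ (1 / q)
          ≤ (ENNReal.ofReal (1 / L) * C ^ q) ^ (1 / q) :=
            ENNReal.rpow_le_rpow (mul_le_mul_right (hW n) _) hqinv.le
        _ = (ENNReal.ofReal (1 / L)) ^ (1 / q) * C := by
            rw [ENNReal.mul_rpow_of_nonneg _ _ hqinv.le, ← ENNReal.rpow_mul,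
              mul_one_div_cancel hq0.ne', ENNReal.rpow_one]
    have h2 : (ENNReal.ofReal (1 / L) * An n) ^ ((p - 1) / p) =
        (ENNReal.ofReal (1 / L)) ^ ((p - 1) / p) * (An n) ^ ((p - 1) / p) :=
      ENNReal.mul_rpow_of_nonneg _ _ hr.le
    have hrne0 : (An n) ^ ((p - 1) / p) ≠ 0 :=
      (ENNReal.rpow_pos (pos_iff_ne_zero.mpr (hAn0 n)) (hAn_top n).ne).ne'
    have hrneT : (An n) ^ ((p - 1) / p) ≠ ⊤ :=
      (ENNReal.rpow_lt_top_of_nonneg hr.le (hAn_top n).ne).ne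
    calc (ENNReal.ofReal (1 / L) *
          weakL1 (Set.indicator (Ioo a b) (fun x => v x ^ q))) ^ (1 / q) *
          (ENNReal.ofReal (1 / L) * An n) ^ ((p - 1) / p)
        ≤ ((ENNReal.ofReal (1 / L)) ^ (1 / q) * C) *
          ((ENNReal.ofReal (1 / L)) ^ ((p - 1) / p) * (An n) ^ ((p - 1) / p)) := by
          rw [h2]
          exact mul_le_mul_left h1 _
      _ = ENNReal.ofReal K *
          ((ENNReal.ofReal (1 / L)) ^ (1 / q) * (ENNReal.ofReal (1 / L)) ^ ((p - 1) / p) *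
            ENNReal.ofReal (L ^ (1 - α))) *
          ((An n) ^ (-((p - 1) / p)) * (An n) ^ ((p - 1) / p)) := by
          rw [hCdef]; ring
      _ = ENNReal.ofReal K := by
          rw [← ENNReal.rpow_add _ _ hL0' hLT', hsum,
            ENNReal.ofReal_rpow_of_pos (by positivity),
            ← ENNReal.ofReal_mul (by positivity),
            ← Real.mul_rpow (by positivity) hL.le,
            one_div_mul_cancel hL.ne', Real.one_rpow, ENNReal.ofReal_one,
            ENNReal.rpow_neg, ENNReal.inv_mul_cancel hrne0 hrneT, mul_one, mul_one]
  have hAsup2 : (ENNReal.ofReal (1 / L) * A) ^ ((p - 1) / p) =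
      ⨆ n, (ENNReal.ofReal (1 / L) * An n) ^ ((p - 1) / p) := by
    rw [← hA_sup, ENNReal.mul_iSup]
    have h := OrderIso.map_iSup (ENNReal.orderIsoRpow ((p - 1) / p) hr)
      (fun n => ENNReal.ofReal (1 / L) * An n)
    simpa only [ENNReal.orderIsoRpow_apply] using h
  rw [hAsup2, ENNReal.mul_iSup]
  exact iSup_le hCn

theorem stmt5 (α p q : ℝ) (hα : 0 < α) (hα1 : α < 1) (hp : 1 < p) (hpα : p < 1 / α)
    (hq : 1 / q = 1 / p - α) :
    ∃ c : ℝ, 0 < c ∧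
      ∀ w : ℝ → ℝ, (∀ x, 0 ≤ w x) → LocallyIntegrable w →
        ∀ K : ℝ, 0 < K →
        (∀ f : ℝ → ℝ, Measurable f →
            MemLp (fun x => f x * w x) (ENNReal.ofReal p) →
            weakNorm q (fun x => ENNReal.ofReal (w x) * MplusFrac α f x) ≤
              ENNReal.ofReal K * (∫⁻ x, ENNReal.ofReal (|f x| * w x) ^ p) ^ (1 / p)) →
        ApqStarPlusConst p q w < ⊤ ∧
          ApqStarPlusConst p q w ≤ ENNReal.ofReal (c * K) := by
  refine ⟨1, one_pos, ?_⟩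
  intro w hw0 hw K hK Hw
  have hsm := hw.aestronglyMeasurable
  set v : ℝ → ℝ := fun x => max (hsm.mk w x) 0 with hvdef
  have hvm : Measurable v := hsm.stronglyMeasurable_mk.measurable.max measurable_const
  have hwv : w =ᵐ[volume] v := by
    filter_upwards [hsm.ae_eq_mk] with x hx
    rw [hvdef]
    simp only
    rw [← hx, max_eq_left (hw0 x)]
  have hv0 : ∀ x, 0 ≤ v x := fun x => le_max_right _ _
  have Hv : ∀ f : ℝ → ℝ, Measurable f →
      MemLp (fun x => f x * v x) (ENNReal.ofReal p) →
      weakNorm q (fun x => ENNReal.ofReal (v x) * MplusFrac α f x) ≤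
        ENNReal.ofReal K * (∫⁻ x, ENNReal.ofReal (|f x| * v x) ^ p) ^ (1 / p) := by
    intro f hf hmem
    have hfwv : (fun x => f x * v x) =ᵐ[volume] fun x => f x * w x :=
      hwv.mono fun x hx => by show f x * v x = f x * w x; rw [hx]
    have h1 := Hw f hf (hmem.ae_eq hfwv)
    have h2 : weakNorm q (fun x => ENNReal.ofReal (w x) * MplusFrac α f x) =
        weakNorm q (fun x => ENNReal.ofReal (v x) * MplusFrac α f x) := by
      unfold weakNorm
      refine iSup_congr fun t => iSup_congr fun ht => ?_
      beta_reduce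
      have hvol : volume {x : ℝ | ENNReal.ofReal t < ENNReal.ofReal (w x) * MplusFrac α f x} =
          volume {x : ℝ | ENNReal.ofReal t < ENNReal.ofReal (v x) * MplusFrac α f x} := by
        apply measure_congr
        filter_upwards [hwv] with x hx
        show (ENNReal.ofReal t < ENNReal.ofReal (w x) * MplusFrac α f x) =
          (ENNReal.ofReal t < ENNReal.ofReal (v x) * MplusFrac α f x)
        rw [hx]
      rw [hvol]
    have h3 : (∫⁻ x, ENNReal.ofReal (|f x| * w x) ^ p) =
        ∫⁻ x, ENNReal.ofReal (|f x| * v x) ^ p :=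
      lintegral_congr_ae (hwv.mono fun x hx => by
        show ENNReal.ofReal (|f x| * w x) ^ p = ENNReal.ofReal (|f x| * v x) ^ p
        rw [hx])
    rw [← h2, ← h3]
    exact h1
  have hkey := key_lemma α p q hα hα1 hp hpα hq v hvm hv0 K hK Hv
  have hEq : ApqStarPlusConst p q w = ApqStarPlusConst p q v := by
    unfold ApqStarPlusConst
    refine iSup_congr fun a => iSup_congr fun b => iSup_congr fun c =>
      iSup_congr fun hab => iSup_congr fun hbc => ?_
    have e1 : weakL1 (Set.indicator (Ioo a b) (fun x => w x ^ q)) =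
        weakL1 (Set.indicator (Ioo a b) (fun x => v x ^ q)) := by
      unfold weakL1
      refine iSup_congr fun t => iSup_congr fun ht => ?_
      have hvol : volume {x : ℝ | t < |Set.indicator (Ioo a b) (fun x => w x ^ q) x|} =
          volume {x : ℝ | t < |Set.indicator (Ioo a b) (fun x => v x ^ q) x|} := by
        apply measure_congr
        filter_upwards [hwv] with x hx
        show (t < |Set.indicator (Ioo a b) (fun x => w x ^ q) x|) =
          (t < |Set.indicator (Ioo a b) (fun x => v x ^ q) x|)
        by_cases hmem : x ∈ Ioo a b
        · rw [Set.indicator_of_mem hmem, Set.indicator_of_mem hmem, hx]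
        · rw [Set.indicator_of_notMem hmem, Set.indicator_of_notMem hmem]
      rw [hvol]
    have e2 : (∫⁻ y in Ioo b c, ENNReal.ofReal (w y ^ (-(p / (p - 1))))) =
        ∫⁻ y in Ioo b c, ENNReal.ofReal (v y ^ (-(p / (p - 1)))) :=
      lintegral_congr_ae (ae_restrict_of_ae (hwv.mono fun x hx => by
        show ENNReal.ofReal (w x ^ (-(p / (p - 1)))) = ENNReal.ofReal (v x ^ (-(p / (p - 1))))
        rw [hx]))
    rw [e1, e2]
  constructor
  · rw [hEq]
    exact lt_of_le_of_lt hkey ofReal_lt_top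
  · rw [hEq, one_mul]
    exact hkey
end

section
/- Let 1<p<∞ and let ρ be a weight on ℝ. Then [ρ]_{A_p^+} ≤ 2^p · sup over all a<c, with b = (a+c)/2, of ((1/(b-a))∫_a^b ρ)·((1/(b-a))∫_b^c ρ^{-1/(p-1)})^{p-1}. -/
open MeasureTheory Set ENNReal

/-- The one-sided Muckenhoupt constant
`[ρ]_{A_p^+} = sup_{a<b<c} ((1/(c-a))∫_a^b ρ) ((1/(c-a))∫_b^c ρ^{-1/(p-1)})^{p-1}`. -/
noncomputable def ApPlusConst (p : ℝ) (ρ : ℝ → ℝ) : ℝ≥0∞ :=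
  ⨆ (a : ℝ) (b : ℝ) (c : ℝ) (_ : a < b) (_ : b < c),
    (ENNReal.ofReal (1 / (c - a)) * ∫⁻ y in Set.Ioo a b, ENNReal.ofReal (ρ y)) *
      (ENNReal.ofReal (1 / (c - a)) *
        ∫⁻ y in Set.Ioo b c, ENNReal.ofReal (ρ y ^ (-(1 / (p - 1))))) ^ (p - 1)

/-- The middle-point variant of the `A_p^+` constant, where `b = (a+c)/2` and the
averages are normalized by `b - a`. -/
noncomputable def ApPlusMidConst (p : ℝ) (ρ : ℝ → ℝ) : ℝ≥0∞ :=
  ⨆ (a : ℝ) (c : ℝ) (_ : a < c),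
    (ENNReal.ofReal (1 / ((a + c) / 2 - a)) *
        ∫⁻ y in Set.Ioo a ((a + c) / 2), ENNReal.ofReal (ρ y)) *
      (ENNReal.ofReal (1 / ((a + c) / 2 - a)) *
        ∫⁻ y in Set.Ioo ((a + c) / 2) c, ENNReal.ofReal (ρ y ^ (-(1 / (p - 1))))) ^ (p - 1)

theorem stmt15 (p : ℝ) (hp : 1 < p) (ρ : ℝ → ℝ) (hρ : ∀ x, 0 ≤ ρ x)
    (hρloc : LocallyIntegrable ρ) :
    ApPlusConst p ρ ≤ ENNReal.ofReal (2 ^ p) * ApPlusMidConst p ρ := by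
  have h1 : ApPlusConst p ρ ≤ ApPlusMidConst p ρ := by
    rw [ApPlusConst]
    refine iSup_le fun a => iSup_le fun b => iSup_le fun c => iSup_le fun hab =>
      iSup_le fun hbc => ?_
    rw [ApPlusMidConst]
    refine le_trans ?_ (le_iSup_of_le (b - (c - a)) (le_iSup_of_le (b + (c - a))
      (le_iSup_of_le (by linarith) le_rfl)))
    have hmid : ((b - (c - a)) + (b + (c - a))) / 2 = b := by ring
    rw [hmid]
    have hnorm : b - (b - (c - a)) = c - a := by ring
    rw [hnorm]
    gcongr
    · linarith
    · linarith
  calc ApPlusConst p ρ ≤ ApPlusMidConst p ρ := h1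
    _ = 1 * ApPlusMidConst p ρ := (one_mul _).symm
    _ ≤ ENNReal.ofReal (2 ^ p) * ApPlusMidConst p ρ := by
        gcongr
        rw [ENNReal.one_le_ofReal]
        exact Real.one_le_rpow one_le_two (by linarith)
end
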